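/- Let A, B be finite nonempty sets of integers with min A = min B = 0, max A = M, max B = N, and M ≥ N. If x ∈ [0, N] and x + M ∉ A + B, then |[x+M-N, M] \ A| + |[x, N] \ B| ≥ N - x + 1. -/
import Mathlib


open scoped Pointwise

theorem stmt2 (A B : Finset ℤ) (hA : A.Nonempty) (hB : B.Nonempty) (M N : ℤ)
    (hminA : A.min' hA = 0) (hminB : B.min' hB = 0)
    (hmaxA : A.max' hA = M) (hmaxB : B.max' hB = N) (hMN : N ≤ M)
    (x : ℤ) (hx : x ∈ Finset.Icc 0 N) (hxAB : x + M ∉ A + B) :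
    N - x + 1 ≤ ((Finset.Icc (x + M - N) M \ A).card : ℤ)
      + ((Finset.Icc x N \ B).card : ℤ) := by
  simp only [Finset.mem_Icc] at hx
  obtain ⟨hx0, hxN⟩ := hx
  set S := (Finset.Icc x N).filter (fun t => t ∉ B) with hS
  set T := (Finset.Icc x N).filter (fun t => x + M - t ∉ A) with hT
  have hsub : Finset.Icc x N ⊆ S ∪ T := by
    intro t ht
    by_contra h
    simp only [Finset.mem_union, hS, hT, Finset.mem_filter, ht, true_and, not_or,
      not_not] at h
    exact hxAB (by
      have := Finset.add_mem_add h.2 h.1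
      simpa using this)
  have h1 : S.card ≤ (Finset.Icc x N \ B).card := by
    apply Finset.card_le_card
    intro t ht
    simp only [hS, Finset.mem_filter] at ht
    simp [Finset.mem_sdiff, ht.1, ht.2]
  have hinj : Function.Injective (fun t : ℤ => x + M - t) := by
    intro a b hab; simp only at hab; omega
  have h2 : T.card ≤ (Finset.Icc (x + M - N) M \ A).card := by
    rw [← Finset.card_image_of_injective T hinj]
    apply Finset.card_le_card
    intro t ht
    simp only [Finset.mem_image] at ht
    obtain ⟨a, haT, rfl⟩ := ht
    simp only [hT, Finset.mem_filter, Finset.mem_Icc] at haT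
    simp only [Finset.mem_sdiff, Finset.mem_Icc]
    exact ⟨⟨by omega, by omega⟩, haT.2⟩
  have h3 : (Finset.Icc x N).card ≤ S.card + T.card :=
    le_trans (Finset.card_le_card hsub) (Finset.card_union_le _ _)
  have h4 : (Finset.Icc x N).card = (N + 1 - x).toNat := Int.card_Icc x N
  omega
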